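/- Let a : ℝ → ℝ and b : ℝ → ℝ satisfy a' = (1/λ)(s - a)(a²+1)², b' = (1/λ)(s - b), with a(0) = b(0), where λ > 0 and s ∈ ℝ. Then |a(t) - s| ≤ |a(0) - s| e^{-t/λ} for all t ≥ 0. -/

import Mathlib

/-- Comparison bound: if `a' = (1/λ)(s-a)(a²+1)²` and `b' = (1/λ)(s-b)` with
`a(0) = b(0)`, `λ > 0`, then `|a(t) - s| ≤ |a(0) - s| e^{-t/λ}` for all `t ≥ 0`. -/
theorem radial_convergence_rate_bound
    (lam s : ℝ) (hlam : 0 < lam) (a b : ℝ → ℝ)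
    (ha : ∀ t : ℝ, HasDerivAt a ((1 / lam) * (s - a t) * ((a t) ^ 2 + 1) ^ 2) t)
    (hb : ∀ t : ℝ, HasDerivAt b ((1 / lam) * (s - b t)) t)
    (h0 : a 0 = b 0) :
    ∀ t : ℝ, 0 ≤ t → |a t - s| ≤ |a 0 - s| * Real.exp (-t / lam) := by
  set f : ℝ → ℝ := fun t => (a t - s) ^ 2 * Real.exp (2 * t / lam) with hf
  have hderiv : ∀ t : ℝ, HasDerivAt f
      ((2 * (a t - s) * ((1 / lam) * (s - a t) * ((a t) ^ 2 + 1) ^ 2)) *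
        Real.exp (2 * t / lam)
        + (a t - s) ^ 2 * (Real.exp (2 * t / lam) * (2 / lam))) t := by
    intro t
    have h1 : HasDerivAt (fun t => (a t - s) ^ 2)
        (2 * (a t - s) * ((1 / lam) * (s - a t) * ((a t) ^ 2 + 1) ^ 2)) t := by
      have := ((ha t).sub_const s).fun_pow 2
      simpa [mul_comm, mul_assoc, mul_left_comm] using this
    have h2 : HasDerivAt (fun t : ℝ => Real.exp (2 * t / lam))
        (Real.exp (2 * t / lam) * (2 / lam)) t := by
      have hlin : HasDerivAt (fun t : ℝ => 2 * t / lam) (2 / lam) t := by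
        simpa using ((hasDerivAt_id t).const_mul 2).div_const lam
      simpa [Function.comp_def] using (Real.hasDerivAt_exp (2 * t / lam)).comp t hlin
    simpa using h1.fun_mul h2
  have hanti : Antitone f := by
    apply antitone_of_deriv_nonpos
    · exact fun t => (hderiv t).differentiableAt
    · intro t
      rw [(hderiv t).deriv]
      have hexp : 0 < Real.exp (2 * t / lam) := Real.exp_pos _
      have hsq : (1:ℝ) ≤ ((a t) ^ 2 + 1) ^ 2 := by nlinarith [sq_nonneg (a t)]
      have hlam' : 0 < 1 / lam := by positivity
      have hkey : 0 ≤ 2 * (1 / lam) * Real.exp (2 * t / lam) * (a t - s) ^ 2 *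
          (((a t) ^ 2 + 1) ^ 2 - 1) := by
        have h1 : 0 ≤ ((a t) ^ 2 + 1) ^ 2 - 1 := by linarith
        positivity
      have heq : 2 * (a t - s) * (1 / lam * (s - a t) * ((a t) ^ 2 + 1) ^ 2) *
          Real.exp (2 * t / lam) + (a t - s) ^ 2 * (Real.exp (2 * t / lam) * (2 / lam))
          = -(2 * (1 / lam) * Real.exp (2 * t / lam) * (a t - s) ^ 2 *
          (((a t) ^ 2 + 1) ^ 2 - 1)) := by ring
      rw [heq]
      linarith
  intro t ht
  have hft : f t ≤ f 0 := hanti ht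
  have hE : Real.exp (2 * t / lam) = (Real.exp (-t / lam))⁻¹ ^ 2 := by
    rw [← Real.exp_neg, ← Real.exp_nat_mul]
    ring_nf
  have hexp0 : (0:ℝ) < Real.exp (-t / lam) := Real.exp_pos _
  have key : (a t - s) ^ 2 ≤ ((a 0 - s) * Real.exp (-t / lam)) ^ 2 := by
    have h0' : f 0 = (a 0 - s) ^ 2 := by simp [hf]
    rw [h0'] at hft
    have := mul_le_mul_of_nonneg_right hft (sq_nonneg (Real.exp (-t / lam)))
    have hcancel : Real.exp (2 * t / lam) * Real.exp (-t / lam) ^ 2 = 1 := by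
      rw [← Real.exp_nat_mul, ← Real.exp_add]
      norm_num
      ring
    calc (a t - s) ^ 2 = (a t - s) ^ 2 * (Real.exp (2 * t / lam) * Real.exp (-t / lam) ^ 2) := by
          rw [hcancel]; ring
      _ = f t * Real.exp (-t / lam) ^ 2 := by rw [hf]; ring
      _ ≤ (a 0 - s) ^ 2 * Real.exp (-t / lam) ^ 2 := this
      _ = ((a 0 - s) * Real.exp (-t / lam)) ^ 2 := by ring
  have hs := Real.sqrt_le_sqrt key
  rw [Real.sqrt_sq_eq_abs, Real.sqrt_sq_eq_abs, abs_mul, abs_of_pos hexp0] at hs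
  exact hs
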